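/- Let Z ≥ 2, let x₁ < 0, and let u ∈ Δ_Z. Then Σ_{c=1}^Z L_NFL(‖q_c − u‖₁) = (2(Z−1) − Z x₁)/x₁²; in particular this sum is a constant independent of u. -/

import Mathlib

open MeasureTheory Real Finset

/-- Negative fraction linear (NFL) loss with parameter `x1`. -/
noncomputable def LNFL (x1 x : ℝ) : ℝ := if x1 ≤ x then x / x1 ^ 2 - 1 / x1 else -(1 / x)

/-- Exponential linear (EL) loss with parameter `x2`. -/
noncomputable def LEL (x2 x : ℝ) : ℝ := if x2 ≤ x then Real.exp x2 * (x + 1 - x2) else Real.exp x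

/-- The one-hot vector `q_c` for class `c`. -/
def onehot {Z : ℕ} (c : Fin Z) : Fin Z → ℝ := fun z => if z = c then 1 else 0

/-- The ℓ1 norm on `ℝ^Z`. -/
noncomputable def l1norm {Z : ℕ} (v : Fin Z → ℝ) : ℝ := ∑ z, |v z|

/-- Membership in the probability simplex `Δ_Z`. -/
def inSimplex {Z : ℕ} (u : Fin Z → ℝ) : Prop := (∀ z, 0 ≤ u z) ∧ ∑ z, u z = 1

/-- The sum over all classes of the NFL loss of the ℓ1 distance from a point of
the simplex to the one-hot vectors is the constant `(2(Z-1) - Z x₁)/x₁²`,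
independent of the point `u`. -/
theorem nfl_loss_sum_constant {Z : ℕ} (hZ : 2 ≤ Z) {x1 : ℝ} (hx1 : x1 < 0)
    (u : Fin Z → ℝ) (hu : inSimplex u) :
    ∑ c, LNFL x1 (l1norm (onehot c - u))
      = (2 * ((Z : ℝ) - 1) - Z * x1) / x1 ^ 2 := by
  obtain ⟨hpos, hsum⟩ := hu
  have huc : ∀ c, u c ≤ 1 := by
    intro c
    rw [← hsum]
    exact Finset.single_le_sum (fun z _ => hpos z) (Finset.mem_univ c)
  have hl1 : ∀ c, l1norm (onehot c - u) = 2 * (1 - u c) := by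
    intro c
    have : ∀ z, |(onehot c - u) z| = (if z = c then 1 - 2 * u z else 0) + u z := by
      intro z
      simp only [Pi.sub_apply, onehot]
      by_cases h : z = c
      · subst h
        rw [if_pos rfl, if_pos rfl, abs_of_nonneg (by linarith [huc z])]
        ring
      · rw [if_neg h, if_neg h, abs_of_nonpos (by linarith [hpos z])]
        ring
    unfold l1norm
    simp only [this]
    rw [Finset.sum_add_distrib, Finset.sum_ite_eq' Finset.univ c (fun z => 1 - 2 * u z),
      if_pos (Finset.mem_univ c), hsum]
    ring
  have hx1sq : x1 ^ 2 ≠ 0 := pow_ne_zero 2 (ne_of_lt hx1)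
  have : ∀ c : Fin Z, LNFL x1 (l1norm (onehot c - u)) = 2 * (1 - u c) / x1 ^ 2 - 1 / x1 := by
    intro c
    rw [hl1, LNFL, if_pos (by nlinarith [huc c])]
  rw [Finset.sum_congr rfl fun c _ => this c]
  rw [Finset.sum_sub_distrib, Finset.sum_const, Finset.card_univ, Fintype.card_fin]
  have : ∑ c, 2 * (1 - u c) / x1 ^ 2 = (2 * ((Z : ℝ) - 1)) / x1 ^ 2 := by
    rw [← Finset.sum_div]
    congr 1
    rw [← Finset.mul_sum, Finset.sum_sub_distrib, hsum, Finset.sum_const,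
      Finset.card_univ, Fintype.card_fin]
    simp
  rw [this]
  have hx1ne : x1 ≠ 0 := ne_of_lt hx1
  field_simp
  have hx : x1 ^ 2 * x1⁻¹ = x1 := by field_simp
  ring_nf
  rw [mul_assoc, hx]
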